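/- Let H_A be a fixed full-rank m_a × Δ matrix over F_2 with kernel of dimension k_a = Δ - m_a, chosen uniformly among parity-check matrices of dimension-k_a codes, and let c be a Δ×Δ matrix of rank r over F_2. Then Pr[rank(H_A c) = r'] ≤ binom(m_a, r')₂ · binom(r'+k_a, r)₂ / binom(Δ, r)₂, where binom(·,·)₂ denotes the Gaussian binomial coefficient at q = 2. -/

import Mathlib

set_option maxHeartbeats 1000000
set_option synthInstance.maxHeartbeats 200000

open Module


open Matrix

/-- The Gaussian binomial coefficient `binom(x,y)₂`: the number of `y`-dimensional
subspaces of an `x`-dimensional vector space over `F₂`. -/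
noncomputable def gaussBinom (x y : ℕ) : ℕ :=
  Nat.card {W : Submodule (ZMod 2) (Fin x → ZMod 2) // Module.finrank (ZMod 2) W = y}

section Aux

variable {K V : Type*} [Field K] [AddCommGroup V] [Module K V] [FiniteDimensional K V]

/-- GL acts transitively on subspaces of a given dimension. -/
lemma exists_equiv_map (p q : Submodule K V) (h : finrank K p = finrank K q) :
    ∃ g : V ≃ₗ[K] V, p.map (g : V →ₗ[K] V) = q := by
  obtain ⟨p', hp'⟩ := p.exists_isCompl
  obtain ⟨q', hq'⟩ := q.exists_isCompl
  have hc : finrank K p' = finrank K q' := by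
    have h1 := Submodule.finrank_add_eq_of_isCompl hp'
    have h2 := Submodule.finrank_add_eq_of_isCompl hq'
    omega
  let e : p ≃ₗ[K] q := LinearEquiv.ofFinrankEq _ _ h
  let e' : p' ≃ₗ[K] q' := LinearEquiv.ofFinrankEq _ _ hc
  let g : V ≃ₗ[K] V := (Submodule.prodEquivOfIsCompl p p' hp').symm ≪≫ₗ
    (e.prodCongr e') ≪≫ₗ (Submodule.prodEquivOfIsCompl q q' hq')
  refine ⟨g, ?_⟩
  have hle : p.map (g : V →ₗ[K] V) ≤ q := by
    rintro _ ⟨x, hx, rfl⟩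
    have hsymm : (Submodule.prodEquivOfIsCompl p p' hp').symm x = (⟨x, hx⟩, 0) :=
      Submodule.prodEquivOfIsCompl_symm_apply_left p p' hp' ⟨x, hx⟩
    have : (g : V →ₗ[K] V) x = (e ⟨x, hx⟩ : V) := by
      show g x = _
      simp [g, hsymm, Submodule.coe_prodEquivOfIsCompl', LinearEquiv.prodCongr_apply]
    rw [this]
    exact (e ⟨x, hx⟩).2
  exact Submodule.eq_of_le_of_finrank_eq hle (by rw [LinearEquiv.finrank_map_eq]; exact h)

end Aux

instance submodFinite {n : ℕ} : Finite (Submodule (ZMod 2) (Fin n → ZMod 2)) :=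
  Finite.of_injective _ SetLike.coe_injective

/-- The number of `r`-dimensional subspaces contained in an `n`-dimensional subspace. -/
lemma card_sub {Δ : ℕ} (U : Submodule (ZMod 2) (Fin Δ → ZMod 2)) (n r : ℕ)
    (hU : finrank (ZMod 2) U = n) :
    Nat.card {W : Submodule (ZMod 2) (Fin Δ → ZMod 2) //
      W ≤ U ∧ finrank (ZMod 2) W = r} = gaussBinom n r := by
  classical
  let b : Basis (Fin n) (ZMod 2) U := (Module.finBasis (ZMod 2) U).reindex (finCongr hU)
  let ℓ : (Fin n → ZMod 2) →ₗ[ZMod 2] (Fin Δ → ZMod 2) :=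
    U.subtype ∘ₗ (b.equivFun.symm : (Fin n → ZMod 2) ≃ₗ[ZMod 2] U).toLinearMap
  have hinj : Function.Injective ℓ :=
    U.injective_subtype.comp b.equivFun.symm.injective
  have hrange : LinearMap.range ℓ = U := by
    rw [LinearMap.range_comp, LinearEquiv.range, Submodule.map_top, Submodule.range_subtype]
  have key1 : ∀ W' : Submodule (ZMod 2) (Fin n → ZMod 2), Submodule.map ℓ W' ≤ U :=
    fun W' => hrange ▸ LinearMap.map_le_range
  have key2 : ∀ W' : Submodule (ZMod 2) (Fin n → ZMod 2),
      finrank (ZMod 2) (Submodule.map ℓ W') = finrank (ZMod 2) W' :=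
    fun W' => ((Submodule.equivMapOfInjective ℓ hinj W').finrank_eq).symm
  have key3 : ∀ W : Submodule (ZMod 2) (Fin Δ → ZMod 2), W ≤ U →
      Submodule.map ℓ (Submodule.comap ℓ W) = W :=
    fun W hW => Submodule.map_comap_eq_self (hrange ▸ hW)
  symm
  apply Nat.card_congr
  exact
    { toFun := fun W' => ⟨Submodule.map ℓ W'.1, key1 W'.1, (key2 W'.1).trans W'.2⟩
      invFun := fun W => ⟨Submodule.comap ℓ W.1,
        by rw [← key2 (Submodule.comap ℓ W.1), key3 W.1 W.2.1]; exact W.2.2⟩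
      left_inv := fun W' => Subtype.ext (Submodule.comap_map_eq_of_injective hinj W'.1)
      right_inv := fun W => Subtype.ext (key3 W.1 W.2.1) }

lemma finrank_comap_eq {Δ m : ℕ} (f : (Fin Δ → ZMod 2) →ₗ[ZMod 2] (Fin m → ZMod 2))
    (hf : Function.Surjective f) (W : Submodule (ZMod 2) (Fin m → ZMod 2)) :
    finrank (ZMod 2) (W.comap f) =
      finrank (ZMod 2) W + finrank (ZMod 2) (LinearMap.ker f) := by
  have hker : LinearMap.ker f ≤ W.comap f := by
    intro x hx
    simp [Submodule.mem_comap, LinearMap.mem_ker.mp hx]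
  have h1 := LinearMap.finrank_range_add_finrank_ker (f.domRestrict (W.comap f))
  rw [LinearMap.range_domRestrict, LinearMap.ker_domRestrict] at h1
  have h2 : Submodule.map f (W.comap f) = W :=
    Submodule.map_comap_eq_self (by rw [LinearMap.range_eq_top.2 hf]; exact le_top)
  have h3 : finrank (ZMod 2) ((LinearMap.ker f).comap (W.comap f).subtype) =
      finrank (ZMod 2) (LinearMap.ker f) :=
    (Submodule.comapSubtypeEquivOfLe hker).finrank_eq
  rw [h2, h3] at h1
  exact h1.symm

lemma rank_eq_iff_surj {m Δ : ℕ} (H : Matrix (Fin m) (Fin Δ) (ZMod 2)) :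
    H.rank = m ↔ Function.Surjective H.mulVecLin := by
  constructor
  · intro h
    have : LinearMap.range H.mulVecLin = ⊤ :=
      Submodule.eq_top_of_finrank_eq (by
        rw [Module.finrank_fintype_fun_eq_card, Fintype.card_fin]; exact h)
    exact LinearMap.range_eq_top.1 this
  · intro h
    rw [Matrix.rank, LinearMap.range_eq_top.2 h, finrank_top,
      Module.finrank_fintype_fun_eq_card, Fintype.card_fin]

lemma card_cond_eq {Δ ma : ℕ} (W' : Submodule (ZMod 2) (Fin ma → ZMod 2))
    (V V₀ : Submodule (ZMod 2) (Fin Δ → ZMod 2))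
    (h : finrank (ZMod 2) V = finrank (ZMod 2) V₀) :
    Nat.card {H : Matrix (Fin ma) (Fin Δ) (ZMod 2) //
        H.rank = ma ∧ V₀ ≤ W'.comap H.mulVecLin} =
    Nat.card {H : Matrix (Fin ma) (Fin Δ) (ZMod 2) //
        H.rank = ma ∧ V ≤ W'.comap H.mulVecLin} := by
  classical
  have condAux : ∀ (g : (Fin Δ → ZMod 2) ≃ₗ[ZMod 2] (Fin Δ → ZMod 2))
      (A B : Submodule (ZMod 2) (Fin Δ → ZMod 2))
      (hAB : A.map (g : (Fin Δ → ZMod 2) →ₗ[ZMod 2] (Fin Δ → ZMod 2)) = B)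
      (H : Matrix (Fin ma) (Fin Δ) (ZMod 2)),
      ((H * LinearMap.toMatrix' (g : (Fin Δ → ZMod 2) →ₗ[ZMod 2] (Fin Δ → ZMod 2))).rank = ma ∧
        A ≤ W'.comap (H * LinearMap.toMatrix'
          (g : (Fin Δ → ZMod 2) →ₗ[ZMod 2] (Fin Δ → ZMod 2))).mulVecLin) ↔
      (H.rank = ma ∧ B ≤ W'.comap H.mulVecLin) := by
    intro g A B hAB H
    have hmul : (LinearMap.toMatrix'
        (g : (Fin Δ → ZMod 2) →ₗ[ZMod 2] (Fin Δ → ZMod 2))).mulVecLin =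
        (g : (Fin Δ → ZMod 2) →ₗ[ZMod 2] (Fin Δ → ZMod 2)) := by
      rw [← Matrix.toLin'_apply', Matrix.toLin'_toMatrix']
    have h1 : (H * LinearMap.toMatrix'
        (g : (Fin Δ → ZMod 2) →ₗ[ZMod 2] (Fin Δ → ZMod 2))).mulVecLin =
        H.mulVecLin ∘ₗ (g : (Fin Δ → ZMod 2) →ₗ[ZMod 2] (Fin Δ → ZMod 2)) := by
      rw [Matrix.mulVecLin_mul, hmul]
    have h3 : (H * LinearMap.toMatrix'
        (g : (Fin Δ → ZMod 2) →ₗ[ZMod 2] (Fin Δ → ZMod 2))).rank = ma ↔ H.rank = ma := by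
      rw [rank_eq_iff_surj, rank_eq_iff_surj, h1, LinearMap.coe_comp]
      exact ⟨fun hs => hs.of_comp, fun hs => hs.comp g.surjective⟩
    refine and_congr h3 ?_
    rw [h1, Submodule.comap_comp, ← Submodule.map_le_iff_le_comap, hAB]
  obtain ⟨g, hg⟩ := exists_equiv_map V V₀ h
  have hg' : V₀.map (g.symm : (Fin Δ → ZMod 2) →ₗ[ZMod 2] (Fin Δ → ZMod 2)) = V := by
    rw [← hg, ← Submodule.map_comp]
    have : (g.symm : (Fin Δ → ZMod 2) →ₗ[ZMod 2] (Fin Δ → ZMod 2)) ∘ₗ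
        (g : (Fin Δ → ZMod 2) →ₗ[ZMod 2] (Fin Δ → ZMod 2)) = LinearMap.id := by
      ext x; simp
    rw [this, Submodule.map_id]
  have hGG' : LinearMap.toMatrix' (g : (Fin Δ → ZMod 2) →ₗ[ZMod 2] (Fin Δ → ZMod 2)) *
      LinearMap.toMatrix' (g.symm : (Fin Δ → ZMod 2) →ₗ[ZMod 2] (Fin Δ → ZMod 2)) = 1 := by
    rw [← LinearMap.toMatrix'_comp]
    have : (g : (Fin Δ → ZMod 2) →ₗ[ZMod 2] (Fin Δ → ZMod 2)) ∘ₗ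
        (g.symm : (Fin Δ → ZMod 2) →ₗ[ZMod 2] (Fin Δ → ZMod 2)) = LinearMap.id := by
      ext x; simp
    rw [this, LinearMap.toMatrix'_id]
  have hG'G : LinearMap.toMatrix' (g.symm : (Fin Δ → ZMod 2) →ₗ[ZMod 2] (Fin Δ → ZMod 2)) *
      LinearMap.toMatrix' (g : (Fin Δ → ZMod 2) →ₗ[ZMod 2] (Fin Δ → ZMod 2)) = 1 := by
    rw [← LinearMap.toMatrix'_comp]
    have : (g.symm : (Fin Δ → ZMod 2) →ₗ[ZMod 2] (Fin Δ → ZMod 2)) ∘ₗ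
        (g : (Fin Δ → ZMod 2) →ₗ[ZMod 2] (Fin Δ → ZMod 2)) = LinearMap.id := by
      ext x; simp
    rw [this, LinearMap.toMatrix'_id]
  apply Nat.card_congr
  exact
    { toFun := fun H => ⟨H.1 * LinearMap.toMatrix' (g : (Fin Δ → ZMod 2) →ₗ[ZMod 2] (Fin Δ → ZMod 2)),
        (condAux g V V₀ hg H.1).mpr H.2⟩
      invFun := fun H => ⟨H.1 * LinearMap.toMatrix' (g.symm : (Fin Δ → ZMod 2) →ₗ[ZMod 2] (Fin Δ → ZMod 2)),
        (condAux g.symm V₀ V hg' H.1).mpr H.2⟩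
      left_inv := fun H => Subtype.ext (by
        show H.1 * _ * _ = H.1
        rw [Matrix.mul_assoc, hGG', Matrix.mul_one])
      right_inv := fun H => Subtype.ext (by
        show H.1 * _ * _ = H.1
        rw [Matrix.mul_assoc, hG'G, Matrix.mul_one]) }

lemma key_identity (Δ ma ka r r' : ℕ) (hka : ka = Δ - ma)
    (V : Submodule (ZMod 2) (Fin Δ → ZMod 2)) (hV : finrank (ZMod 2) V = r)
    (W' : Submodule (ZMod 2) (Fin ma → ZMod 2)) (hW' : finrank (ZMod 2) W' = r') :
    Nat.card {H : Matrix (Fin ma) (Fin Δ) (ZMod 2) //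
        H.rank = ma ∧ V ≤ W'.comap H.mulVecLin} * gaussBinom Δ r
    = Nat.card {H : Matrix (Fin ma) (Fin Δ) (ZMod 2) // H.rank = ma} *
        gaussBinom (r' + ka) r := by
  classical
  set S := {H : Matrix (Fin ma) (Fin Δ) (ZMod 2) // H.rank = ma} with hS
  set subV := {V₀ : Submodule (ZMod 2) (Fin Δ → ZMod 2) // finrank (ZMod 2) V₀ = r}
    with hsubV
  letI : Fintype S := Fintype.ofFinite _
  letI : Fintype subV := Fintype.ofFinite _
  set P := {p : S × subV // p.2.1 ≤ W'.comap p.1.1.mulVecLin} with hP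
  -- count by rows
  have count1 : Nat.card P =
      Nat.card S * gaussBinom (r' + ka) r := by
    have e1 : P ≃ Σ H : S, {V₀ : subV // V₀.1 ≤ W'.comap H.1.mulVecLin} :=
      Equiv.subtypeProdEquivSigmaSubtype
        (fun (H : S) (V₀ : subV) => V₀.1 ≤ W'.comap H.1.mulVecLin)
    have fib : ∀ H : S,
        Nat.card {V₀ : subV // V₀.1 ≤ W'.comap H.1.mulVecLin} =
          gaussBinom (r' + ka) r := by
      intro H
      have e2 : {V₀ : subV // V₀.1 ≤ W'.comap H.1.mulVecLin} ≃
          {V₀ : Submodule (ZMod 2) (Fin Δ → ZMod 2) //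
            V₀ ≤ W'.comap H.1.mulVecLin ∧ finrank (ZMod 2) V₀ = r} :=
        (Equiv.subtypeSubtypeEquivSubtypeInter
            (fun V₀ : Submodule (ZMod 2) (Fin Δ → ZMod 2) => finrank (ZMod 2) V₀ = r)
            (fun V₀ => V₀ ≤ W'.comap H.1.mulVecLin)).trans
          (Equiv.subtypeEquivRight (fun _ => and_comm))
      rw [Nat.card_congr e2]
      apply card_sub
      have hsurj := (rank_eq_iff_surj H.1).1 H.2
      rw [finrank_comap_eq _ hsurj W', hW']
      congr 1
      have hrn := LinearMap.finrank_range_add_finrank_ker H.1.mulVecLin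
      rw [Module.finrank_fintype_fun_eq_card, Fintype.card_fin] at hrn
      have hra : finrank (ZMod 2) (LinearMap.range H.1.mulVecLin) = ma := H.2
      omega
    letI : ∀ H : S, Fintype {V₀ : subV // V₀.1 ≤ W'.comap H.1.mulVecLin} :=
      fun H => Fintype.ofFinite _
    rw [Nat.card_congr e1, Nat.card_eq_fintype_card, Fintype.card_sigma]
    rw [Finset.sum_congr rfl (fun H _ => (Nat.card_eq_fintype_card).symm.trans (fib H))]
    rw [Finset.sum_const, Finset.card_univ, smul_eq_mul, Nat.card_eq_fintype_card]
  -- count by columns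
  have count2 : Nat.card P = gaussBinom Δ r *
      Nat.card {H : Matrix (Fin ma) (Fin Δ) (ZMod 2) //
        H.rank = ma ∧ V ≤ W'.comap H.mulVecLin} := by
    have e1 : P ≃ Σ V₀ : subV, {H : S // V₀.1 ≤ W'.comap H.1.mulVecLin} :=
      ((Equiv.subtypeEquiv (Equiv.prodComm S subV) (fun x => Iff.rfl) :
          P ≃ {y : subV × S // y.1.1 ≤ W'.comap y.2.1.mulVecLin})).trans
        (Equiv.subtypeProdEquivSigmaSubtype
          (fun (V₀ : subV) (H : S) => V₀.1 ≤ W'.comap H.1.mulVecLin))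
    have fib : ∀ V₀ : subV,
        Nat.card {H : S // V₀.1 ≤ W'.comap H.1.mulVecLin} =
          Nat.card {H : Matrix (Fin ma) (Fin Δ) (ZMod 2) //
            H.rank = ma ∧ V ≤ W'.comap H.mulVecLin} := by
      intro V₀
      rw [Nat.card_congr (Equiv.subtypeSubtypeEquivSubtypeInter
        (fun H : Matrix (Fin ma) (Fin Δ) (ZMod 2) => H.rank = ma)
        (fun H => V₀.1 ≤ W'.comap H.mulVecLin))]
      exact card_cond_eq W' V V₀.1 (hV.trans V₀.2.symm)
    letI : ∀ V₀ : subV, Fintype {H : S // V₀.1 ≤ W'.comap H.1.mulVecLin} :=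
      fun V₀ => Fintype.ofFinite _
    rw [Nat.card_congr e1, Nat.card_eq_fintype_card, Fintype.card_sigma]
    rw [Finset.sum_congr rfl (fun V₀ _ => (Nat.card_eq_fintype_card).symm.trans (fib V₀))]
    rw [Finset.sum_const, Finset.card_univ, smul_eq_mul]
    congr 1
    rw [← Nat.card_eq_fintype_card]
    rfl
  rw [mul_comm]
  rw [← count2, count1]

/-- Let `H_A` be a uniformly random full-rank `m_a × Δ` matrix over `F₂`
(equivalently, a uniformly random parity-check matrix of a dimension-`k_a = Δ - m_a`
code), and let `c` be a fixed `Δ×Δ` matrix of rank `r`. Then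
`Pr[rank(H_A·c) = r'] ≤ binom(m_a,r')₂ · binom(r'+k_a,r)₂ / binom(Δ,r)₂`. -/
theorem stmt_15 (Δ ma ka r r' : ℕ) (hma : ma ≤ Δ) (hka : ka = Δ - ma)
    (c : Matrix (Fin Δ) (Fin Δ) (ZMod 2)) (hrank : c.rank = r) :
    ((Nat.card {H : Matrix (Fin ma) (Fin Δ) (ZMod 2) //
        H.rank = ma ∧ (H * c).rank = r'} : ℝ) /
      (Nat.card {H : Matrix (Fin ma) (Fin Δ) (ZMod 2) // H.rank = ma} : ℝ)) ≤
      (gaussBinom ma r' : ℝ) * (gaussBinom (r' + ka) r : ℝ) / (gaussBinom Δ r : ℝ) := by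
  classical
  by_cases hN : Nat.card {H : Matrix (Fin ma) (Fin Δ) (ZMod 2) // H.rank = ma} = 0
  · have he : IsEmpty {H : Matrix (Fin ma) (Fin Δ) (ZMod 2) // H.rank = ma} := by
      rcases Nat.card_eq_zero.mp hN with h | h
      · exact h
      · exact absurd h (not_infinite_iff_finite.mpr inferInstance)
    have hz : Nat.card {H : Matrix (Fin ma) (Fin Δ) (ZMod 2) //
        H.rank = ma ∧ (H * c).rank = r'} = 0 := by
      rw [Nat.card_eq_zero]
      exact Or.inl ⟨fun x => he.elim ⟨x.1, x.2.1⟩⟩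
    rw [hz, hN]
    simp only [Nat.cast_zero, zero_div]
    positivity
  · set V : Submodule (ZMod 2) (Fin Δ → ZMod 2) := LinearMap.range c.mulVecLin with hVdef
    have hV : finrank (ZMod 2) V = r := hrank
    have hZpos : 0 < gaussBinom Δ r := by
      have : Nonempty {W : Submodule (ZMod 2) (Fin Δ → ZMod 2) //
          finrank (ZMod 2) W = r} := ⟨⟨V, hV⟩⟩
      exact Nat.card_pos
    set T := {H : Matrix (Fin ma) (Fin Δ) (ZMod 2) //
        H.rank = ma ∧ (H * c).rank = r'} with hT
    set subW := {W : Submodule (ZMod 2) (Fin ma → ZMod 2) //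
        finrank (ZMod 2) W = r'} with hsubW
    letI : Fintype subW := Fintype.ofFinite _
    have hφaux : ∀ x : T, finrank (ZMod 2) (V.map x.1.mulVecLin) = r' := by
      intro x
      have h1 : LinearMap.range ((x.1 * c).mulVecLin) = V.map x.1.mulVecLin := by
        rw [Matrix.mulVecLin_mul, LinearMap.range_comp]
      have h2 : (x.1 * c).rank = finrank (ZMod 2) (V.map x.1.mulVecLin) := by
        rw [Matrix.rank, h1]
      rw [← h2]; exact x.2.2
    set φ : T → subW := fun x => ⟨V.map x.1.mulVecLin, hφaux x⟩ with hφ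
    letI : Fintype T := Fintype.ofFinite _
    letI : ∀ w : subW, Fintype {x : T // φ x = w} := fun w => Fintype.ofFinite _
    -- main natural-number inequality
    have hfib : ∀ w : subW, Nat.card {x : T // φ x = w} ≤
        Nat.card {H : Matrix (Fin ma) (Fin Δ) (ZMod 2) //
          H.rank = ma ∧ V ≤ (w.1).comap H.mulVecLin} := by
      intro w
      apply Nat.card_le_card_of_injective
        (f := fun x : {x : T // φ x = w} => (⟨x.1.1, x.1.2.1,
          Submodule.map_le_iff_le_comap.mp (le_of_eq (congrArg Subtype.val x.2))⟩ :
          {H : Matrix (Fin ma) (Fin Δ) (ZMod 2) //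
            H.rank = ma ∧ V ≤ (w.1).comap H.mulVecLin}))
      intro a b hab
      have h2 := congrArg Subtype.val hab
      exact Subtype.ext (Subtype.ext h2)
    have hkey : ∀ w : subW,
        Nat.card {H : Matrix (Fin ma) (Fin Δ) (ZMod 2) //
          H.rank = ma ∧ V ≤ (w.1).comap H.mulVecLin} * gaussBinom Δ r =
        Nat.card {H : Matrix (Fin ma) (Fin Δ) (ZMod 2) // H.rank = ma} *
          gaussBinom (r' + ka) r :=
      fun w => key_identity Δ ma ka r r' hka V hV w.1 w.2
    have hsum : Nat.card T = ∑ w : subW, Nat.card {x : T // φ x = w} := by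
      rw [Nat.card_congr (Equiv.sigmaFiberEquiv φ).symm, Nat.card_eq_fintype_card,
        Fintype.card_sigma]
      exact Finset.sum_congr rfl (fun w _ => Nat.card_eq_fintype_card.symm)
    have hineq : Nat.card T * gaussBinom Δ r ≤
        gaussBinom ma r' * (Nat.card {H : Matrix (Fin ma) (Fin Δ) (ZMod 2) //
          H.rank = ma} * gaussBinom (r' + ka) r) := by
      rw [hsum, Finset.sum_mul]
      calc ∑ w : subW, Nat.card {x : T // φ x = w} * gaussBinom Δ r
          ≤ ∑ w : subW, Nat.card {H : Matrix (Fin ma) (Fin Δ) (ZMod 2) //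
              H.rank = ma} * gaussBinom (r' + ka) r := by
            refine Finset.sum_le_sum (fun w _ => ?_)
            rw [← hkey w]
            exact Nat.mul_le_mul_right _ (hfib w)
        _ = gaussBinom ma r' * (Nat.card {H : Matrix (Fin ma) (Fin Δ) (ZMod 2) //
              H.rank = ma} * gaussBinom (r' + ka) r) := by
            rw [Finset.sum_const, Finset.card_univ, smul_eq_mul]
            congr 1
            rw [← Nat.card_eq_fintype_card]
            rfl
    -- pass to the reals
    have hNpos : (0 : ℝ) < Nat.card {H : Matrix (Fin ma) (Fin Δ) (ZMod 2) //
        H.rank = ma} := by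
      exact_mod_cast Nat.pos_of_ne_zero hN
    have hZpos' : (0 : ℝ) < gaussBinom Δ r := by exact_mod_cast hZpos
    rw [div_le_div_iff₀ hNpos hZpos']
    have := hineq
    calc (Nat.card T : ℝ) * gaussBinom Δ r
        ≤ (gaussBinom ma r' : ℝ) * (Nat.card {H : Matrix (Fin ma) (Fin Δ) (ZMod 2) //
            H.rank = ma} * gaussBinom (r' + ka) r) := by exact_mod_cast hineq
      _ = (gaussBinom ma r' : ℝ) * gaussBinom (r' + ka) r *
            Nat.card {H : Matrix (Fin ma) (Fin Δ) (ZMod 2) // H.rank = ma} := by ring
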